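/- Let μ be a compactly supported probability measure on ℝ with λ_max = sup(supp μ), and let σ > 0 and β ≥ 0 satisfy βσ² < −s_*. Then inf_{γ > βλ_max} [ γσ² − ∫ μ(dλ) log(γ − βλ) ] = 1 + log σ² + ∫_0^{βσ²} R_μ(x) dx, and the infimum is attained at γ = β R_μ(βσ²) + 1/σ² (with the convention R_μ(0) interpreted by continuity when β = 0, where the minimizer is γ = 1/σ²). -/

import Mathlib

open MeasureTheory Filter Topology

noncomputable section

/-- The supremum of the support of a (compactly supported) measure on `ℝ`:
`λ_max = sup(supp μ)`. -/
def suppMax (μ : Measure ℝ) : ℝ := sInf {r : ℝ | μ (Set.Ioi r) = 0}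

/-- The Stieltjes transform `S_μ(z) = ∫ μ(dλ)/(λ − z)`. -/
def stieltjesT (μ : Measure ℝ) (z : ℝ) : ℝ := ∫ l, (l - z)⁻¹ ∂μ

/-- `s_* = lim_{z↓λ_max} S_μ(z) ∈ [−∞, 0)`, realized (using monotonicity of `S_μ`) as the
infimum of `S_μ` over `(λ_max, ∞)`, viewed in the extended reals. -/
def sStarE (μ : Measure ℝ) : EReal :=
  ⨅ z ∈ Set.Ioi (suppMax μ), ((stieltjesT μ z : ℝ) : EReal)

/-- The `R`-transform `R_μ(z) = S_μ^{-1}(−z) − 1/z`, where `S_μ^{-1}` is the inverse of the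
restriction of the Stieltjes transform to `(λ_max, ∞)`. -/
def Rtransform (μ : Measure ℝ) (z : ℝ) : ℝ :=
  Function.invFunOn (stieltjesT μ) (Set.Ioi (suppMax μ)) (-z) - 1 / z

namespace St15
set_option linter.unusedSectionVars false
set_option linter.unusedVariables false


variable {μ : Measure ℝ} [IsProbabilityMeasure μ] {M : ℝ}

lemma exists_bound (hcomp : ∃ K : Set ℝ, IsCompact K ∧ μ Kᶜ = 0) :
    ∃ M : ℝ, 0 < M ∧ |suppMax μ| ≤ M ∧ (∀ᵐ l ∂μ, l ∈ Set.Icc (-M) (suppMax μ)) := by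
  obtain ⟨K, hK, hKc⟩ := hcomp
  obtain ⟨r, hr⟩ := hK.isBounded.subset_closedBall 0
  set M : ℝ := max r 1 with hMdef
  have hM1 : (1:ℝ) ≤ M := le_max_right _ _
  have hKM : ∀ x ∈ K, |x| ≤ M := by
    intro x hx
    have := hr hx
    rw [Metric.mem_closedBall, Real.dist_eq, sub_zero] at this
    exact this.trans (le_max_left _ _)
  have hMmem : μ (Set.Ioi M) = 0 := by
    refine measure_mono_null ?_ hKc
    intro x hx hxK
    exact absurd ((le_abs_self x).trans (hKM x hxK)) (not_le.2 hx)
  have hSne : {r : ℝ | μ (Set.Ioi r) = 0}.Nonempty := ⟨M, hMmem⟩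
  have hbdd : ∀ s ∈ {r : ℝ | μ (Set.Ioi r) = 0}, -M ≤ s := by
    intro s hs
    by_contra h
    push_neg at h
    have huniv : Set.Ioi s ∪ Kᶜ = Set.univ := by
      ext x
      simp only [Set.mem_union, Set.mem_Ioi, Set.mem_compl_iff, Set.mem_univ, iff_true]
      by_cases hxK : x ∈ K
      · left
        have := (abs_le.1 (hKM x hxK)).1
        linarith
      · exact Or.inr hxK
    have : μ Set.univ = 0 := by
      rw [← huniv]
      exact measure_union_null hs hKc
    simp at this
  have hbddBelow : BddBelow {r : ℝ | μ (Set.Ioi r) = 0} := ⟨-M, hbdd⟩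
  have hlub : suppMax μ ≤ M := csInf_le hbddBelow hMmem
  have hllb : -M ≤ suppMax μ := le_csInf hSne hbdd
  have hIoi : μ (Set.Ioi (suppMax μ)) = 0 := by
    have hsub : Set.Ioi (suppMax μ) ⊆ ⋃ n : ℕ, Set.Ioi (suppMax μ + (n+1:ℝ)⁻¹) := by
      intro x hx
      have hx' : (0:ℝ) < x - suppMax μ := sub_pos.2 hx
      obtain ⟨n, hn⟩ := exists_nat_one_div_lt hx'
      refine Set.mem_iUnion.2 ⟨n, ?_⟩
      simp only [Set.mem_Ioi]
      rw [one_div] at hn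
      linarith
    refine measure_mono_null hsub (measure_iUnion_null fun n => ?_)
    have hlt : suppMax μ < suppMax μ + (n+1:ℝ)⁻¹ := by
      have : (0:ℝ) < (n+1:ℝ)⁻¹ := by positivity
      linarith
    obtain ⟨s, hs, hs'⟩ := (csInf_lt_iff hbddBelow hSne).1 hlt
    exact measure_mono_null (fun x hx => lt_trans hs' hx) hs
  refine ⟨M, by linarith, abs_le.2 ⟨hllb, hlub⟩, ?_⟩
  have h1 : ∀ᵐ l ∂μ, l ≤ suppMax μ := by
    rw [ae_iff]
    simpa [Set.Ioi] using hIoi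
  have h2 : ∀ᵐ l ∂μ, -M ≤ l := by
    rw [ae_iff]
    refine measure_mono_null ?_ hKc
    intro x hx hxK
    simp only [Set.mem_setOf_eq, not_le] at hx
    exact absurd (abs_le.1 (hKM x hxK)).1 (not_le.2 hx)
  filter_upwards [h1, h2] with l hl1 hl2 using ⟨hl2, hl1⟩

lemma integrable_bdd {f : ℝ → ℝ} (hm : AEStronglyMeasurable f μ) {C : ℝ}
    (h : ∀ᵐ l ∂μ, |f l| ≤ C) : Integrable f μ :=
  (integrable_const C).mono' hm (by simpa [Real.norm_eq_abs] using h)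





lemma integrable_inv' (hae : ∀ᵐ l ∂μ, l ∈ Set.Icc (-M) (suppMax μ))
    {β γ : ℝ} (hβ : 0 ≤ β) (hγ : β * suppMax μ < γ) :
    Integrable (fun l => (γ - β * l)⁻¹) μ := by
  refine integrable_bdd ?_ (C := (γ - β * suppMax μ)⁻¹) ?_
  · exact ((measurable_const.sub (measurable_id.const_mul β)).inv).aestronglyMeasurable
  · filter_upwards [hae] with l hl
    have h1 : β * l ≤ β * suppMax μ := mul_le_mul_of_nonneg_left hl.2 hβ
    have h2 : 0 < γ - β * l := by linarith
    rw [abs_of_pos (by positivity)]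
    gcongr

lemma integrable_log' (hae : ∀ᵐ l ∂μ, l ∈ Set.Icc (-M) (suppMax μ))
    {β γ : ℝ} (hβ : 0 ≤ β) (hγ : β * suppMax μ < γ) :
    Integrable (fun l => Real.log (γ - β * l)) μ := by
  refine integrable_bdd ?_
    (C := max |Real.log (γ - β * suppMax μ)| |Real.log (γ + β * M)|) ?_
  · exact (Real.measurable_log.comp
      (measurable_const.sub (measurable_id.const_mul β))).aestronglyMeasurable
  · filter_upwards [hae] with l hl
    have h1 : β * l ≤ β * suppMax μ := mul_le_mul_of_nonneg_left hl.2 hβ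
    have h1' : -(β * M) ≤ β * l := by
      have := mul_le_mul_of_nonneg_left hl.1 hβ
      linarith [this]
    have h2 : 0 < γ - β * suppMax μ := by linarith
    refine abs_le_max_abs_abs ?_ ?_
    · exact Real.log_le_log h2 (by linarith)
    · exact Real.log_le_log (by linarith) (by linarith)

lemma integrable_invl (hae : ∀ᵐ l ∂μ, l ∈ Set.Icc (-M) (suppMax μ))
    {z : ℝ} (hz : suppMax μ < z) :
    Integrable (fun l => (l - z)⁻¹) μ := by
  refine integrable_bdd ?_ (C := (z - suppMax μ)⁻¹) ?_
  · exact ((measurable_id.sub measurable_const).inv).aestronglyMeasurable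
  · filter_upwards [hae] with l hl
    have h2 : 0 < z - l := by linarith [hl.2]
    rw [abs_inv, abs_of_neg (by linarith : l - z < 0), neg_sub]
    gcongr <;> linarith [hl.1, hl.2]

lemma neg_stieltjes_int {z : ℝ} :
    ∫ l, (z - l)⁻¹ ∂μ = -stieltjesT μ z := by
  rw [stieltjesT, ← integral_neg]
  congr 1
  ext l
  rw [← neg_sub l z, inv_neg]

lemma stieltjes_bounds (hM : |suppMax μ| ≤ M)
    (hae : ∀ᵐ l ∂μ, l ∈ Set.Icc (-M) (suppMax μ))
    {z : ℝ} (hz : suppMax μ < z) :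
    -(z - suppMax μ)⁻¹ ≤ stieltjesT μ z ∧ stieltjesT μ z ≤ -(z + M)⁻¹ := by
  have hlm : -M ≤ suppMax μ := (abs_le.1 hM).1
  have hzM : 0 < z + M := by linarith
  have hint := integrable_invl hae hz
  constructor
  · have hle : ∀ᵐ l ∂μ, -(z - suppMax μ)⁻¹ ≤ (l - z)⁻¹ := by
      filter_upwards [hae] with l hl
      have h2 : 0 < z - l := by linarith [hl.2]
      rw [neg_le, ← inv_neg, neg_sub]
      gcongr <;> linarith [hl.1, hl.2]
    have := integral_mono_ae (integrable_const _) hint hle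
    simpa [measure_univ, stieltjesT] using this
  · have hle : ∀ᵐ l ∂μ, (l - z)⁻¹ ≤ -(z + M)⁻¹ := by
      filter_upwards [hae] with l hl
      have h2 : 0 < z - l := by linarith [hl.2]
      rw [le_neg, ← inv_neg, neg_sub]
      gcongr <;> linarith [hl.1, hl.2]
    have := integral_mono_ae hint (integrable_const _) hle
    simpa [measure_univ, stieltjesT] using this

lemma stieltjes_strictMonoOn (hM : |suppMax μ| ≤ M)
    (hae : ∀ᵐ l ∂μ, l ∈ Set.Icc (-M) (suppMax μ)) :
    StrictMonoOn (stieltjesT μ) (Set.Ioi (suppMax μ)) := by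
  have hlm : -M ≤ suppMax μ := (abs_le.1 hM).1
  intro z1 hz1 z2 hz2 h12
  simp only [Set.mem_Ioi] at hz1 hz2
  set c : ℝ := (z2 - z1) / ((z1 + M) * (z2 + M)) with hc
  have hz1M : 0 < z1 + M := by linarith
  have hz2M : 0 < z2 + M := by linarith
  have hcpos : 0 < c := div_pos (by linarith) (by positivity)
  have hkey : ∀ᵐ l ∂μ, (l - z1)⁻¹ + c ≤ (l - z2)⁻¹ := by
    filter_upwards [hae] with l hl
    have ha : 0 < z1 - l := by linarith [hl.2]
    have hb : 0 < z2 - l := by linarith [hl.2]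
    have hAB : (z1 - l) * (z2 - l) ≤ (z1 + M) * (z2 + M) := by
      apply mul_le_mul (by linarith [hl.1]) (by linarith [hl.1]) hb.le (by linarith)
    have h3 : c ≤ (z2 - z1) / ((z1 - l) * (z2 - l)) := by
      rw [hc]
      gcongr
    have h4 : (z2 - z1) / ((z1 - l) * (z2 - l)) = (l - z2)⁻¹ - (l - z1)⁻¹ := by
      have e1 : (l - z1)⁻¹ = -(z1 - l)⁻¹ := by rw [← neg_sub z1 l, inv_neg]
      have e2 : (l - z2)⁻¹ = -(z2 - l)⁻¹ := by rw [← neg_sub z2 l, inv_neg]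
      rw [e1, e2]
      field_simp
      ring
    linarith
  have h1 := integrable_invl hae hz1
  have h2 := integrable_invl hae hz2
  have hadd : Integrable (fun l => (l - z1)⁻¹ + c) μ := h1.add (integrable_const c)
  have := integral_mono_ae hadd h2 hkey
  rw [integral_add h1 (integrable_const c)] at this
  simp only [integral_const, measure_univ, probReal_univ, smul_eq_mul, one_mul] at this
  have : stieltjesT μ z1 + c ≤ stieltjesT μ z2 := this
  linarith

lemma stieltjes_continuousAt (hM : |suppMax μ| ≤ M)
    (hae : ∀ᵐ l ∂μ, l ∈ Set.Icc (-M) (suppMax μ))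
    {z : ℝ} (hz : suppMax μ < z) : ContinuousAt (stieltjesT μ) z := by
  have : ContinuousAt (fun z' => ∫ l, (l - z')⁻¹ ∂μ) z := by
    refine continuousAt_of_dominated (bound := fun _ => ((z - suppMax μ)/2)⁻¹)
      ?_ ?_ (integrable_const _) ?_
    · filter_upwards with z'
      exact ((measurable_id.sub measurable_const).inv).aestronglyMeasurable
    · have hmem : Set.Ioi ((z + suppMax μ)/2) ∈ 𝓝 z :=
        (isOpen_Ioi).mem_nhds (by simp only [Set.mem_Ioi]; linarith)
      filter_upwards [hmem] with z' hz'
      simp only [Set.mem_Ioi] at hz'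
      filter_upwards [hae] with l hl
      have h2 : 0 < z' - l := by linarith [hl.2]
      rw [Real.norm_eq_abs, abs_inv, abs_of_neg (by linarith : l - z' < 0), neg_sub]
      gcongr
      linarith [hl.2]
    · filter_upwards [hae] with l hl
      exact ((continuousAt_const.sub continuousAt_id).inv₀ (by simp; linarith [hl.2]))
  exact this


def Dset (μ : Measure ℝ) : Set ℝ := {x : ℝ | 0 < x ∧ sStarE μ < ((-x : ℝ) : EReal)}

def zf (μ : Measure ℝ) (x : ℝ) : ℝ :=
  Function.invFunOn (stieltjesT μ) (Set.Ioi (suppMax μ)) (-x)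

lemma Rtransform_eq (μ : Measure ℝ) (x : ℝ) : Rtransform μ x = zf μ x - 1 / x := rfl

lemma isOpen_Dset : IsOpen (Dset μ) := by
  have : Dset μ = Set.Ioi 0 ∩ (fun x : ℝ => ((-x : ℝ) : EReal)) ⁻¹' (Set.Ioi (sStarE μ)) := by
    ext x
    simp [Dset, Set.mem_Ioi, and_comm]
  rw [this]
  exact isOpen_Ioi.inter
    (isOpen_Ioi.preimage (continuous_coe_real_ereal.comp continuous_neg))

lemma exists_S_eq (hM : |suppMax μ| ≤ M)
    (hae : ∀ᵐ l ∂μ, l ∈ Set.Icc (-M) (suppMax μ))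
    {x : ℝ} (hx : x ∈ Dset μ) : ∃ z, suppMax μ < z ∧ stieltjesT μ z = -x := by
  obtain ⟨hx0, hxs⟩ := hx
  rw [sStarE] at hxs
  obtain ⟨z1, hz1lt⟩ := iInf_lt_iff.1 hxs
  obtain ⟨hz1mem, hz1lt⟩ := iInf_lt_iff.1 hz1lt
  rw [EReal.coe_lt_coe_iff] at hz1lt
  rw [Set.mem_Ioi] at hz1mem
  set z2 := suppMax μ + x⁻¹ + 1 with hz2def
  have hxinv : 0 < x⁻¹ := inv_pos.2 hx0
  have hz2mem : suppMax μ < z2 := by rw [hz2def]; linarith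
  have hz2 : -x < stieltjesT μ z2 := by
    have hb := (stieltjes_bounds hM hae hz2mem).1
    have hlt : (z2 - suppMax μ)⁻¹ < x := by
      have h1 : z2 - suppMax μ = x⁻¹ + 1 := by rw [hz2def]; ring
      rw [h1]
      have := inv_strictAnti₀ hxinv (show x⁻¹ < x⁻¹ + 1 by linarith)
      rwa [inv_inv] at this
    linarith
  have hz12 : z1 < z2 := by
    by_contra h
    push_neg at h
    have := (stieltjes_strictMonoOn hM hae).monotoneOn (Set.mem_Ioi.2 hz2mem)
      (Set.mem_Ioi.2 hz1mem) h
    linarith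
  have hsub : Set.Icc z1 z2 ⊆ Set.Ioi (suppMax μ) := fun w hw => lt_of_lt_of_le hz1mem hw.1
  have hcont : ContinuousOn (stieltjesT μ) (Set.Icc z1 z2) := fun w hw =>
    (stieltjes_continuousAt hM hae (hsub hw)).continuousWithinAt
  obtain ⟨z0, hz0, hz0'⟩ := intermediate_value_Icc hz12.le hcont ⟨hz1lt.le, hz2.le⟩
  exact ⟨z0, lt_of_lt_of_le hz1mem hz0.1, hz0'⟩

lemma zf_spec (hM : |suppMax μ| ≤ M)
    (hae : ∀ᵐ l ∂μ, l ∈ Set.Icc (-M) (suppMax μ))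
    {x : ℝ} (hx : x ∈ Dset μ) :
    suppMax μ < zf μ x ∧ stieltjesT μ (zf μ x) = -x := by
  obtain ⟨z0, hz0, hz0'⟩ := exists_S_eq hM hae hx
  have hex : ∃ a ∈ Set.Ioi (suppMax μ), stieltjesT μ a = -x := ⟨z0, hz0, hz0'⟩
  exact ⟨Function.invFunOn_mem hex, Function.invFunOn_eq hex⟩

lemma zf_bounds (hM : |suppMax μ| ≤ M)
    (hae : ∀ᵐ l ∂μ, l ∈ Set.Icc (-M) (suppMax μ))
    {x : ℝ} (hx : x ∈ Dset μ) :
    -M ≤ zf μ x - x⁻¹ ∧ zf μ x - x⁻¹ ≤ suppMax μ := by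
  obtain ⟨hmem, hval⟩ := zf_spec hM hae hx
  have hx0 : 0 < x := hx.1
  obtain ⟨hb1, hb2⟩ := stieltjes_bounds hM hae hmem
  rw [hval] at hb1 hb2
  have hlm : -M ≤ suppMax μ := (abs_le.1 hM).1
  have hzM : 0 < zf μ x + M := by linarith
  have h1 : x ≤ (zf μ x - suppMax μ)⁻¹ := by linarith
  have h2 : (zf μ x + M)⁻¹ ≤ x := by linarith
  have h3 : zf μ x - suppMax μ ≤ x⁻¹ := by
    rw [← inv_inv (zf μ x - suppMax μ)]
    gcongr
  have h4 : x⁻¹ ≤ zf μ x + M := by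
    rw [← inv_inv (zf μ x + M)]
    gcongr
  constructor <;> linarith

lemma zf_anti (hM : |suppMax μ| ≤ M)
    (hae : ∀ᵐ l ∂μ, l ∈ Set.Icc (-M) (suppMax μ))
    {x y : ℝ} (hx : x ∈ Dset μ) (hy : y ∈ Dset μ) (hxy : x < y) :
    zf μ y < zf μ x := by
  obtain ⟨hmx, hvx⟩ := zf_spec hM hae hx
  obtain ⟨hmy, hvy⟩ := zf_spec hM hae hy
  by_contra h
  push_neg at h
  have := (stieltjes_strictMonoOn hM hae).monotoneOn (Set.mem_Ioi.2 hmx)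
    (Set.mem_Ioi.2 hmy) h
  rw [hvx, hvy] at this
  linarith

lemma zf_tendsto (hM : |suppMax μ| ≤ M)
    (hae : ∀ᵐ l ∂μ, l ∈ Set.Icc (-M) (suppMax μ))
    {x : ℝ} (hx : x ∈ Dset μ) :
    Tendsto (zf μ) (𝓝[Dset μ] x) (𝓝 (zf μ x)) := by
  obtain ⟨hmx, hvx⟩ := zf_spec hM hae hx
  refine tendsto_order.2 ⟨?_, ?_⟩
  · intro b hb
    have hmax : max b (suppMax μ) < zf μ x := max_lt hb hmx
    obtain ⟨w, hw1, hw2⟩ := exists_between hmax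
    have hwlm : suppMax μ < w := lt_of_le_of_lt (le_max_right _ _) hw1
    have hSw : stieltjesT μ w < -x := by
      have := stieltjes_strictMonoOn hM hae (Set.mem_Ioi.2 hwlm) (Set.mem_Ioi.2 hmx) hw2
      rwa [hvx] at this
    have hU : Set.Iio (-stieltjesT μ w) ∈ 𝓝[Dset μ] x :=
      mem_nhdsWithin_of_mem_nhds (isOpen_Iio.mem_nhds (Set.mem_Iio.2 (by linarith)))
    filter_upwards [hU, self_mem_nhdsWithin] with y hyU hyD
    rw [Set.mem_Iio] at hyU
    obtain ⟨hmy, hvy⟩ := zf_spec hM hae hyD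
    by_contra hc
    push_neg at hc
    have hwy : zf μ y ≤ w := le_trans hc (le_trans (le_max_left _ _) hw1.le)
    have := (stieltjes_strictMonoOn hM hae).monotoneOn (Set.mem_Ioi.2 hmy)
      (Set.mem_Ioi.2 hwlm) hwy
    rw [hvy] at this
    linarith
  · intro b hb
    obtain ⟨w, hw1, hw2⟩ := exists_between hb
    have hwlm : suppMax μ < w := lt_trans hmx hw1
    have hSw : -x < stieltjesT μ w := by
      have := stieltjes_strictMonoOn hM hae (Set.mem_Ioi.2 hmx) (Set.mem_Ioi.2 hwlm) hw1
      rwa [hvx] at this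
    have hU : Set.Ioi (-stieltjesT μ w) ∈ 𝓝[Dset μ] x :=
      mem_nhdsWithin_of_mem_nhds (isOpen_Ioi.mem_nhds (Set.mem_Ioi.2 (by linarith)))
    filter_upwards [hU, self_mem_nhdsWithin] with y hyU hyD
    rw [Set.mem_Ioi] at hyU
    obtain ⟨hmy, hvy⟩ := zf_spec hM hae hyD
    by_contra hc
    push_neg at hc
    have hwy : w ≤ zf μ y := le_trans hw2.le hc
    have := (stieltjes_strictMonoOn hM hae).monotoneOn (Set.mem_Ioi.2 hwlm)
      (Set.mem_Ioi.2 hmy) hwy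
    rw [hvy] at this
    linarith

lemma key_min (hae : ∀ᵐ l ∂μ, l ∈ Set.Icc (-M) (suppMax μ))
    {β γ γ₀ s2 : ℝ} (hβ : 0 ≤ β) (hγ : β * suppMax μ < γ) (hγ₀ : β * suppMax μ < γ₀)
    (hcrit : ∫ l, (γ₀ - β * l)⁻¹ ∂μ = s2) :
    γ₀ * s2 - ∫ l, Real.log (γ₀ - β * l) ∂μ ≤ γ * s2 - ∫ l, Real.log (γ - β * l) ∂μ := by
  have hIγ := integrable_log' hae hβ hγ
  have hIγ₀ := integrable_log' hae hβ hγ₀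
  have hIinv := integrable_inv' hae hβ hγ₀
  have hptwise : ∀ᵐ l ∂μ, Real.log (γ - β * l) - Real.log (γ₀ - β * l)
      ≤ (γ - γ₀) * (γ₀ - β * l)⁻¹ := by
    filter_upwards [hae] with l hl
    have h1 : β * l ≤ β * suppMax μ := mul_le_mul_of_nonneg_left hl.2 hβ
    have hA : 0 < γ - β * l := by linarith
    have hB : 0 < γ₀ - β * l := by linarith
    have hlog := Real.log_le_sub_one_of_pos (div_pos hA hB)
    rw [Real.log_div hA.ne' hB.ne'] at hlog
    have heq : (γ - β * l) / (γ₀ - β * l) - 1 = (γ - γ₀) * (γ₀ - β * l)⁻¹ := by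
      rw [div_sub_one hB.ne', div_eq_mul_inv]
      ring_nf
    linarith
  have hsub : Integrable (fun l => Real.log (γ - β * l) - Real.log (γ₀ - β * l)) μ :=
    hIγ.sub hIγ₀
  have hmul : Integrable (fun l => (γ - γ₀) * (γ₀ - β * l)⁻¹) μ := hIinv.const_mul _
  have hint := integral_mono_ae hsub hmul hptwise
  rw [integral_sub hIγ hIγ₀, integral_const_mul, hcrit] at hint
  linarith


def L1 (μ : Measure ℝ) (w : ℝ) : ℝ := ∫ l, Real.log (w - l) ∂μ

lemma integrable_logl (hae : ∀ᵐ l ∂μ, l ∈ Set.Icc (-M) (suppMax μ))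
    {w : ℝ} (hw : suppMax μ < w) : Integrable (fun l => Real.log (w - l)) μ := by
  have := integrable_log' hae zero_le_one (γ := w) (by simpa using hw)
  simpa using this

lemma min1 (hM : |suppMax μ| ≤ M) (hae : ∀ᵐ l ∂μ, l ∈ Set.Icc (-M) (suppMax μ))
    {x : ℝ} (hx : x ∈ Dset μ) {w : ℝ} (hw : suppMax μ < w) :
    x * zf μ x - L1 μ (zf μ x) ≤ x * w - L1 μ w := by
  obtain ⟨hmem, hval⟩ := zf_spec hM hae hx
  have hcrit : ∫ l, (zf μ x - 1 * l)⁻¹ ∂μ = x := by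
    simp only [one_mul]
    rw [neg_stieltjes_int, hval, neg_neg]
  have h := key_min hae (β := 1) zero_le_one (γ := w) (γ₀ := zf μ x)
    (by simpa using hw) (by simpa using hmem) hcrit
  simp only [one_mul] at h
  unfold L1
  linarith [h, mul_comm x (zf μ x), mul_comm x w]

lemma psi_hasDeriv (hM : |suppMax μ| ≤ M)
    (hae : ∀ᵐ l ∂μ, l ∈ Set.Icc (-M) (suppMax μ))
    {x : ℝ} (hx : x ∈ Dset μ) :
    HasDerivAt (fun y => y * zf μ y - L1 μ (zf μ y)) (zf μ x) x := by
  rw [hasDerivAt_iff_isLittleO, Asymptotics.isLittleO_iff]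
  intro c hc
  have hz := zf_tendsto hM hae hx
  have hnb : 𝓝[Dset μ] x = 𝓝 x := nhdsWithin_eq_nhds.2 (isOpen_Dset.mem_nhds hx)
  rw [hnb] at hz
  have hev1 := hz (Metric.closedBall_mem_nhds (zf μ x) hc)
  filter_upwards [hev1, isOpen_Dset.mem_nhds hx] with y hy hyD
  rw [Set.mem_preimage, Metric.mem_closedBall, Real.dist_eq] at hy
  have hub := min1 hM hae hyD (zf_spec hM hae hx).1
  have hlb := min1 hM hae hx (zf_spec hM hae hyD).1
  have e1 : (y - x) * zf μ x = y * zf μ x - x * zf μ x := by ring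
  have e2 : (y - x) * zf μ y = y * zf μ y - x * zf μ y := by ring
  have e3 : (y - x) * (zf μ y - zf μ x) = (y - x) * zf μ y - (y - x) * zf μ x := by ring
  have hA : y * zf μ y - L1 μ (zf μ y) - (x * zf μ x - L1 μ (zf μ x))
      - (y - x) * zf μ x ≤ 0 := by linarith [hub, e1]
  have hB : (y - x) * (zf μ y - zf μ x) ≤ y * zf μ y - L1 μ (zf μ y)
      - (x * zf μ x - L1 μ (zf μ x)) - (y - x) * zf μ x := by linarith [hlb, e2, e3, e1]
  have key : |y * zf μ y - L1 μ (zf μ y) - (x * zf μ x - L1 μ (zf μ x)) - (y - x) * zf μ x|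
      ≤ c * |y - x| := by
    have habs : |y * zf μ y - L1 μ (zf μ y) - (x * zf μ x - L1 μ (zf μ x)) - (y - x) * zf μ x|
        ≤ |(y - x) * (zf μ y - zf μ x)| := by
      rw [abs_of_nonpos hA]
      have := neg_abs_le ((y - x) * (zf μ y - zf μ x))
      linarith
    calc |y * zf μ y - L1 μ (zf μ y) - (x * zf μ x - L1 μ (zf μ x)) - (y - x) * zf μ x|
        ≤ |(y - x) * (zf μ y - zf μ x)| := habs
      _ = |y - x| * |zf μ y - zf μ x| := abs_mul _ _
      _ ≤ |y - x| * c := by gcongr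
      _ = c * |y - x| := mul_comm _ _
  simpa only [Real.norm_eq_abs, smul_eq_mul] using key

def Phi (μ : Measure ℝ) (x : ℝ) : ℝ := x * zf μ x - L1 μ (zf μ x) - Real.log x - 1

lemma phi_hasDeriv (hM : |suppMax μ| ≤ M)
    (hae : ∀ᵐ l ∂μ, l ∈ Set.Icc (-M) (suppMax μ))
    {x : ℝ} (hx : x ∈ Dset μ) :
    HasDerivAt (Phi μ) (Rtransform μ x) x := by
  rw [Rtransform_eq, one_div]
  exact ((psi_hasDeriv hM hae hx).sub (Real.hasDerivAt_log (ne_of_gt hx.1))).sub_const 1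

lemma abs_log_le {u : ℝ} (hu : 1/2 ≤ u) : |Real.log u| ≤ 2 * |u - 1| := by
  have hu0 : 0 < u := by linarith
  rcases le_or_gt 1 u with h | h
  · rw [abs_of_nonneg (Real.log_nonneg h), abs_of_nonneg (by linarith)]
    linarith [Real.log_le_sub_one_of_pos hu0]
  · rw [abs_of_nonpos (Real.log_nonpos hu0.le h.le), abs_of_neg (by linarith : u - 1 < 0)]
    have h1 := Real.log_le_sub_one_of_pos (inv_pos.2 hu0)
    rw [Real.log_inv] at h1
    have h2 : u⁻¹ ≤ 2 := by
      rw [show (2:ℝ) = (2⁻¹)⁻¹ by norm_num]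
      gcongr
      linarith
    have h3 : u * u⁻¹ = 1 := mul_inv_cancel₀ hu0.ne'
    nlinarith [mul_le_mul_of_nonneg_left h2 (show (0:ℝ) ≤ 1 - u by linarith)]

lemma log_integral_sub_tendsto (hM : |suppMax μ| ≤ M) (hM0 : 0 < M)
    (hae : ∀ᵐ l ∂μ, l ∈ Set.Icc (-M) (suppMax μ)) :
    Tendsto (fun w => L1 μ w - Real.log w) atTop (𝓝 0) := by
  refine squeeze_zero_norm' (a := fun w => 2 * M / w) ?_ ?_
  · filter_upwards [eventually_ge_atTop (2 * M + 1)] with w hw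
    have hw0 : 0 < w := by linarith
    have hwlm : suppMax μ < w := by
      have := (abs_le.1 hM).2
      linarith
    have hint := integrable_logl hae hwlm
    have heq : L1 μ w - Real.log w = ∫ l, (Real.log (w - l) - Real.log w) ∂μ := by
      rw [integral_sub hint (integrable_const _)]
      simp [L1, measure_univ]
    rw [heq, Real.norm_eq_abs]
    have hptwise : ∀ᵐ l ∂μ, ‖Real.log (w - l) - Real.log w‖ ≤ 2 * M / w := by
      filter_upwards [hae] with l hl
      have hlM : |l| ≤ M := abs_le.2 ⟨hl.1, hl.2.trans (abs_le.1 hM).2⟩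
      have hwl : 0 < w - l := by
        have := (abs_le.1 hlM).2
        linarith
      rw [Real.norm_eq_abs, ← Real.log_div hwl.ne' hw0.ne']
      have hu1 : (w - l) / w - 1 = -l / w := by field_simp; ring
      have hu2 : |(w - l) / w - 1| ≤ M / w := by
        rw [hu1, abs_div, abs_of_pos hw0, abs_neg]
        gcongr
      have hu : 1/2 ≤ (w - l) / w := by
        rw [le_div_iff₀ hw0]
        have := (abs_le.1 hlM).2
        linarith
      calc |Real.log ((w - l) / w)| ≤ 2 * |(w - l) / w - 1| := abs_log_le hu
        _ ≤ 2 * (M / w) := by linarith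
        _ = 2 * M / w := by ring
    have := norm_integral_le_of_norm_le (integrable_const (2 * M / w)) hptwise
    simpa [measure_univ] using this
  · exact tendsto_const_nhds.div_atTop tendsto_id

lemma zf_atTop (hM : |suppMax μ| ≤ M)
    (hae : ∀ᵐ l ∂μ, l ∈ Set.Icc (-M) (suppMax μ))
    {t : ℝ} (ht0 : 0 < t) (ht : Set.Ioc 0 t ⊆ Dset μ) :
    Tendsto (zf μ) (𝓝[>] (0:ℝ)) atTop := by
  have h1 : Tendsto (fun x : ℝ => x⁻¹ + -M) (𝓝[>] (0:ℝ)) atTop :=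
    tendsto_atTop_add_const_right _ (-M) tendsto_inv_nhdsGT_zero
  refine tendsto_atTop_mono' _ ?_ h1
  filter_upwards [Ioc_mem_nhdsGT ht0] with x hx
  have := (zf_bounds hM hae (ht hx)).1
  linarith

lemma xz_tendsto (hM : |suppMax μ| ≤ M)
    (hae : ∀ᵐ l ∂μ, l ∈ Set.Icc (-M) (suppMax μ))
    {t : ℝ} (ht0 : 0 < t) (ht : Set.Ioc 0 t ⊆ Dset μ) :
    Tendsto (fun x => x * zf μ x) (𝓝[>] (0:ℝ)) (𝓝 1) := by
  have hlow : Tendsto (fun x : ℝ => 1 - x * M) (𝓝[>] (0:ℝ)) (𝓝 1) := by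
    have hc : Continuous (fun x : ℝ => 1 - x * M) := by continuity
    have : Tendsto (fun x : ℝ => 1 - x * M) (𝓝 (0:ℝ)) (𝓝 1) := by
      simpa using hc.tendsto (0:ℝ)
    exact this.mono_left nhdsWithin_le_nhds
  have hhigh : Tendsto (fun x : ℝ => 1 + x * suppMax μ) (𝓝[>] (0:ℝ)) (𝓝 1) := by
    have hc : Continuous (fun x : ℝ => 1 + x * suppMax μ) := by continuity
    have : Tendsto (fun x : ℝ => 1 + x * suppMax μ) (𝓝 (0:ℝ)) (𝓝 1) := by
      simpa using hc.tendsto (0:ℝ)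
    exact this.mono_left nhdsWithin_le_nhds
  refine tendsto_of_tendsto_of_tendsto_of_le_of_le' hlow hhigh ?_ ?_
  · filter_upwards [Ioc_mem_nhdsGT ht0] with x hx
    obtain ⟨hb1, hb2⟩ := zf_bounds hM hae (ht hx)
    have hx0 : 0 < x := hx.1
    have hxx : x * x⁻¹ = 1 := mul_inv_cancel₀ hx0.ne'
    nlinarith [mul_le_mul_of_nonneg_left hb2 hx0.le]
  · filter_upwards [Ioc_mem_nhdsGT ht0] with x hx
    obtain ⟨hb1, hb2⟩ := zf_bounds hM hae (ht hx)
    have hx0 : 0 < x := hx.1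
    have hxx : x * x⁻¹ = 1 := mul_inv_cancel₀ hx0.ne'
    nlinarith [mul_le_mul_of_nonneg_left hb1 hx0.le]

lemma phi_tendsto (hM : |suppMax μ| ≤ M) (hM0 : 0 < M)
    (hae : ∀ᵐ l ∂μ, l ∈ Set.Icc (-M) (suppMax μ))
    {t : ℝ} (ht0 : 0 < t) (ht : Set.Ioc 0 t ⊆ Dset μ) :
    Tendsto (Phi μ) (𝓝[>] (0:ℝ)) (𝓝 0) := by
  have hz := zf_atTop hM hae ht0 ht
  have h2 := xz_tendsto hM hae ht0 ht
  have h3 : Tendsto (fun x => L1 μ (zf μ x) - Real.log (zf μ x)) (𝓝[>] (0:ℝ)) (𝓝 0) :=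
    (log_integral_sub_tendsto hM hM0 hae).comp hz
  have h4 : Tendsto (fun x => Real.log (x * zf μ x)) (𝓝[>] (0:ℝ)) (𝓝 0) := by
    have := (Real.continuousAt_log one_ne_zero).tendsto.comp h2
    simpa [Function.comp_def] using this
  have hcomb : Tendsto
      (fun x => x * zf μ x - (L1 μ (zf μ x) - Real.log (zf μ x)) -
        Real.log (x * zf μ x) - 1) (𝓝[>] (0:ℝ)) (𝓝 0) := by
    have := ((h2.sub h3).sub h4).sub_const 1
    simpa using this
  refine hcomb.congr' ?_
  filter_upwards [Ioc_mem_nhdsGT ht0, hz.eventually (eventually_gt_atTop 0)]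
    with x hx hzx
  have hx0 : 0 < x := hx.1
  rw [Phi, Real.log_mul hx0.ne' hzx.ne']
  ring


lemma R_integrableOn (hM : |suppMax μ| ≤ M)
    (hae : ∀ᵐ l ∂μ, l ∈ Set.Icc (-M) (suppMax μ))
    {t : ℝ} (ht : Set.Ioc 0 t ⊆ Dset μ) :
    IntegrableOn (Rtransform μ) (Set.Ioc 0 t) volume := by
  have hCont : ContinuousOn (zf μ) (Dset μ) := fun x hx => zf_tendsto hM hae hx
  have hza : AEMeasurable (zf μ) (volume.restrict (Set.Ioc 0 t)) :=
    (hCont.aemeasurable isOpen_Dset.measurableSet).mono_measure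
      (Measure.restrict_mono ht le_rfl)
  have hR : AEMeasurable (Rtransform μ) (volume.restrict (Set.Ioc 0 t)) := by
    have heq : Rtransform μ = fun x => zf μ x - 1 / x := funext (Rtransform_eq μ)
    rw [heq]
    exact hza.sub ((measurable_const.div measurable_id).aemeasurable)
  have hconst : IntegrableOn (fun _ : ℝ => M + |suppMax μ|) (Set.Ioc 0 t) volume :=
    integrableOn_const measure_Ioc_lt_top.ne
  refine hconst.mono' hR.aestronglyMeasurable ?_
  rw [ae_restrict_iff' measurableSet_Ioc]
  filter_upwards with x hx
  obtain ⟨hb1, hb2⟩ := zf_bounds hM hae (ht hx)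
  rw [Rtransform_eq, Real.norm_eq_abs, one_div, abs_le]
  constructor
  · linarith [abs_nonneg (suppMax μ)]
  · linarith [le_abs_self (suppMax μ), abs_nonneg (suppMax μ), (abs_le.1 hM).1,
      (abs_le.1 hM).2, hb2]

lemma integral_R_eq_phi (hM : |suppMax μ| ≤ M) (hM0 : 0 < M)
    (hae : ∀ᵐ l ∂μ, l ∈ Set.Icc (-M) (suppMax μ))
    {t : ℝ} (ht0 : 0 < t) (ht : Set.Ioc 0 t ⊆ Dset μ) :
    ∫ x in (0:ℝ)..t, Rtransform μ x = Phi μ t := by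
  have hRIoc := R_integrableOn hM hae ht
  have hint0t : IntervalIntegrable (Rtransform μ) volume 0 t := by
    rw [intervalIntegrable_iff_integrableOn_Ioc_of_le ht0.le]
    exact hRIoc
  have hftc : ∀ ε ∈ Set.Ioc (0:ℝ) t, ∫ x in ε..t, Rtransform μ x = Phi μ t - Phi μ ε := by
    intro ε hε
    refine intervalIntegral.integral_eq_sub_of_hasDerivAt ?_ ?_
    · intro x hx
      rw [Set.uIcc_of_le hε.2] at hx
      exact phi_hasDeriv hM hae (ht ⟨lt_of_lt_of_le hε.1 hx.1, hx.2⟩)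
    · exact hint0t.mono_set (by
        rw [Set.uIcc_of_le hε.2, Set.uIcc_of_le ht0.le]
        exact Set.Icc_subset_Icc hε.1.le le_rfl)
  have h2 : Tendsto (fun ε => ∫ x in (0:ℝ)..ε, Rtransform μ x) (𝓝[>] (0:ℝ)) (𝓝 0) := by
    refine squeeze_zero_norm' (a := fun ε => (M + |suppMax μ|) * |ε|) ?_ ?_
    · filter_upwards [Ioc_mem_nhdsGT ht0] with ε hε
      have hb := intervalIntegral.norm_integral_le_of_norm_le_const
        (C := M + |suppMax μ|) (f := Rtransform μ) (a := (0:ℝ)) (b := ε) ?_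
      · simpa using hb
      · intro x hx
        rw [Set.uIoc_of_le hε.1.le] at hx
        obtain ⟨hb1, hb2⟩ := zf_bounds hM hae (ht ⟨hx.1, hx.2.trans hε.2⟩)
        rw [Rtransform_eq, Real.norm_eq_abs, one_div, abs_le]
        constructor
        · linarith [abs_nonneg (suppMax μ)]
        · linarith [le_abs_self (suppMax μ), abs_nonneg (suppMax μ)]
    · have hc : Continuous (fun ε : ℝ => (M + |suppMax μ|) * |ε|) :=
        continuous_const.mul continuous_abs
      have := hc.tendsto 0
      simp only [abs_zero, mul_zero] at this
      exact this.mono_left nhdsWithin_le_nhds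
  have h1 : Tendsto (fun ε => ∫ x in ε..t, Rtransform μ x) (𝓝[>] (0:ℝ))
      (𝓝 (∫ x in (0:ℝ)..t, Rtransform μ x)) := by
    have hc : Tendsto (fun ε => (∫ x in (0:ℝ)..t, Rtransform μ x)
        - ∫ x in (0:ℝ)..ε, Rtransform μ x) (𝓝[>] (0:ℝ))
        (𝓝 (∫ x in (0:ℝ)..t, Rtransform μ x)) := by
      have := (tendsto_const_nhds (x := ∫ x in (0:ℝ)..t, Rtransform μ x)).sub h2
      simpa using this
    refine hc.congr' ?_
    filter_upwards [Ioc_mem_nhdsGT ht0] with ε hε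
    have hint0ε : IntervalIntegrable (Rtransform μ) volume 0 ε := by
      refine hint0t.mono_set ?_
      rw [Set.uIcc_of_le hε.1.le, Set.uIcc_of_le ht0.le]
      exact Set.Icc_subset_Icc le_rfl hε.2
    exact intervalIntegral.integral_interval_sub_left hint0t hint0ε
  have h3 : Tendsto (fun ε => Phi μ t - Phi μ ε) (𝓝[>] (0:ℝ)) (𝓝 (Phi μ t)) := by
    have := (tendsto_const_nhds (x := Phi μ t)).sub (phi_tendsto hM hM0 hae ht0 ht)
    simpa using this
  have heq2 : (fun ε => ∫ x in ε..t, Rtransform μ x) =ᶠ[𝓝[>] (0:ℝ)]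
      fun ε => Phi μ t - Phi μ ε := by
    filter_upwards [Ioc_mem_nhdsGT ht0] with ε hε using hftc ε hε
  exact tendsto_nhds_unique h1 (h3.congr' heq2.symm)

lemma sInf_eq (hae : ∀ᵐ l ∂μ, l ∈ Set.Icc (-M) (suppMax μ))
    {β γ₀ σ2 V : ℝ} (hβ : 0 ≤ β)
    (hγ₀ : β * suppMax μ < γ₀) (hcrit : ∫ l, (γ₀ - β * l)⁻¹ ∂μ = σ2)
    (hval : γ₀ * σ2 - ∫ l, Real.log (γ₀ - β * l) ∂μ = V) :
    sInf {y : ℝ | ∃ γ : ℝ, β * suppMax μ < γ ∧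
      y = γ * σ2 - ∫ l, Real.log (γ - β * l) ∂μ} = V := by
  have hlb : ∀ y ∈ {y : ℝ | ∃ γ : ℝ, β * suppMax μ < γ ∧
      y = γ * σ2 - ∫ l, Real.log (γ - β * l) ∂μ}, V ≤ y := by
    rintro y ⟨γ, hγ, rfl⟩
    rw [← hval]
    exact key_min hae hβ hγ hγ₀ hcrit
  apply le_antisymm
  · exact csInf_le ⟨V, hlb⟩ ⟨γ₀, hγ₀, hval.symm⟩
  · exact le_csInf ⟨_, ⟨γ₀, hγ₀, rfl⟩⟩ hlb

end St15

open St15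

/-- Let `μ` be a compactly supported probability measure on `ℝ` with
`λ_max = sup(supp μ)`, and let `σ > 0` and `β ≥ 0` satisfy `βσ² < −s_*`. Then
`inf_{γ > βλ_max} [ γσ² − ∫ μ(dλ) log(γ − βλ) ] = 1 + log σ² + ∫_0^{βσ²} R_μ(x) dx`,
and the infimum is attained at `γ₀ = β R_μ(βσ²) + 1/σ²` (for `β = 0` the term `β R_μ(0)`
vanishes, so the minimizer is `γ₀ = 1/σ²`, implementing the continuity convention). -/
theorem statement15
    (μ : Measure ℝ) [IsProbabilityMeasure μ]
    (hcomp : ∃ K : Set ℝ, IsCompact K ∧ μ Kᶜ = 0)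
    (σ β : ℝ) (hσ : 0 < σ) (hβ : 0 ≤ β)
    (hcond : ((β * σ ^ 2 : ℝ) : EReal) < -(sStarE μ)) :
    sInf {y : ℝ | ∃ γ : ℝ, β * suppMax μ < γ ∧
        y = γ * σ ^ 2 - ∫ l, Real.log (γ - β * l) ∂μ}
      = (1 + Real.log (σ ^ 2) + ∫ x in (0:ℝ)..(β * σ ^ 2), Rtransform μ x) ∧
    β * suppMax μ < β * Rtransform μ (β * σ ^ 2) + 1 / σ ^ 2 ∧
    ((β * Rtransform μ (β * σ ^ 2) + 1 / σ ^ 2) * σ ^ 2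
        - ∫ l, Real.log (β * Rtransform μ (β * σ ^ 2) + 1 / σ ^ 2 - β * l) ∂μ)
      = (1 + Real.log (σ ^ 2) + ∫ x in (0:ℝ)..(β * σ ^ 2), Rtransform μ x) := by
  obtain ⟨M, hM0, hM, hae⟩ := exists_bound (μ := μ) hcomp
  have hσ2 : 0 < σ ^ 2 := by positivity
  rcases eq_or_lt_of_le hβ with hβ0 | hβpos
  · -- case β = 0
    subst hβ0
    simp only [zero_mul, zero_add, intervalIntegral.integral_same, add_zero, zero_sub, sub_zero]
    have hint : ∫ l, Real.log (1 / σ ^ 2) ∂μ = Real.log (1 / σ ^ 2) := by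
      simp [measure_univ]
    have hval : (1 / σ ^ 2) * σ ^ 2 - ∫ l, Real.log (1 / σ ^ 2 - 0 * l) ∂μ
        = 1 + Real.log (σ ^ 2) := by
      simp only [zero_mul, sub_zero]
      rw [hint, one_div, Real.log_inv]
      rw [inv_mul_cancel₀ hσ2.ne']
      ring
    have hcrit : ∫ l, (1 / σ ^ 2 - 0 * l)⁻¹ ∂μ = σ ^ 2 := by
      simp only [zero_mul, sub_zero, one_div, inv_inv]
      simp [measure_univ]
    have hpos : (0:ℝ) < 1 / σ ^ 2 := by positivity
    refine ⟨?_, hpos, ?_⟩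
    · have := sInf_eq (μ := μ) hae (β := 0) (γ₀ := 1 / σ ^ 2) (σ2 := σ ^ 2) le_rfl
        (by simpa using hpos) hcrit hval
      simpa using this
    · simpa using hval
  · -- case β > 0
    set t := β * σ ^ 2 with htdef
    have htpos : 0 < t := by positivity
    have hstar : sStarE μ < ((-t : ℝ) : EReal) := by
      have := EReal.lt_neg_of_lt_neg hcond
      rwa [EReal.coe_neg]
    have htD : t ∈ Dset μ := ⟨htpos, hstar⟩
    have hIoc : Set.Ioc 0 t ⊆ Dset μ := by
      intro x hx
      refine ⟨hx.1, lt_of_lt_of_le hstar ?_⟩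
      rw [EReal.coe_le_coe_iff]
      linarith [hx.2]
    obtain ⟨hzmem, hzval⟩ := zf_spec hM hae htD
    set z := zf μ t with hzdef
    have hβt : β / t = 1 / σ ^ 2 := by
      rw [htdef]
      field_simp
    have hγ₀ : β * Rtransform μ t + 1 / σ ^ 2 = β * z := by
      rw [Rtransform_eq, mul_sub, ← hzdef]
      have : β * (1 / t) = 1 / σ ^ 2 := by rw [mul_one_div, hβt]
      rw [this]
      ring
    have hintinv : ∫ l, (β * z - β * l)⁻¹ ∂μ = σ ^ 2 := by
      have heq : ∀ l : ℝ, (β * z - β * l)⁻¹ = β⁻¹ * (z - l)⁻¹ := fun l => by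
        rw [← mul_sub, mul_inv]
      simp_rw [heq]
      rw [integral_const_mul, neg_stieltjes_int, hzval, neg_neg, htdef]
      field_simp
    have hphi := integral_R_eq_phi hM hM0 hae htpos hIoc
    have hval : (β * z) * σ ^ 2 - ∫ l, Real.log (β * z - β * l) ∂μ
        = 1 + Real.log (σ ^ 2) + ∫ x in (0:ℝ)..t, Rtransform μ x := by
      rw [hphi]
      have hlogeq : ∫ l, Real.log (β * z - β * l) ∂μ = Real.log β + L1 μ z := by
        have hint := integrable_logl hae hzmem
        have hco : ∀ᵐ l ∂μ, Real.log (β * z - β * l)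
            = Real.log β + Real.log (z - l) := by
          filter_upwards [hae] with l hl
          have hzl : (0:ℝ) < z - l := by linarith [hl.2, hzmem]
          rw [← mul_sub, Real.log_mul hβpos.ne' hzl.ne']
        rw [integral_congr_ae hco, integral_add (integrable_const _) hint]
        simp [measure_univ, L1]
      rw [hlogeq]
      show β * z * σ ^ 2 - (Real.log β + L1 μ z)
        = 1 + Real.log (σ ^ 2) + (t * zf μ t - L1 μ (zf μ t) - Real.log t - 1)
      rw [← hzdef]
      have hlogt : Real.log t = Real.log β + Real.log (σ ^ 2) := by
        rw [htdef, Real.log_mul hβpos.ne' hσ2.ne']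
      rw [hlogt, htdef]
      ring
    have hγ₀mem : β * suppMax μ < β * z := by
      exact mul_lt_mul_of_pos_left hzmem hβpos
    refine ⟨?_, ?_, ?_⟩
    · exact sInf_eq hae hβ hγ₀mem hintinv hval
    · rw [hγ₀]
      exact hγ₀mem
    · rw [hγ₀]
      exact hval

end
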